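/- Let X be a Banach space and A, B bounded linear operators on X. If 1 - AB is a Fredholm operator, then 1 - BA is a Fredholm operator. -/

import Mathlib

open ContinuousLinearMap

/-- `T` is a Fredholm operator: closed range, finite-dimensional kernel,
and finite-dimensional cokernel. -/
def IsFredholm {X : Type*} [NormedAddCommGroup X] [NormedSpace ℂ X]
    (T : X →L[ℂ] X) : Prop :=
  IsClosed (LinearMap.range (T : X →ₗ[ℂ] X) : Set X) ∧
  FiniteDimensional ℂ (LinearMap.ker (T : X →ₗ[ℂ] X)) ∧
  FiniteDimensional ℂ (X ⧸ LinearMap.range (T : X →ₗ[ℂ] X))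

theorem stmt_1 (X : Type*) [NormedAddCommGroup X] [NormedSpace ℂ X] [CompleteSpace X]
    (A B : X →L[ℂ] X) (h : _root_.IsFredholm (1 - A ∘L B)) :
    _root_.IsFredholm (1 - B ∘L A) := by
  obtain ⟨hclT, hkerT, hcokT⟩ := h
  set T : X →L[ℂ] X := 1 - A ∘L B with hT
  set S : X →L[ℂ] X := 1 - B ∘L A with hS
  have hSx : ∀ x : X, S x = x - B (A x) := fun x => by
    simp [hS, sub_apply, comp_apply]
  have hTx : ∀ x : X, T x = x - A (B x) := fun x => by
    simp [hT, sub_apply, comp_apply]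
  have hAS : ∀ x : X, A (S x) = T (A x) := fun x => by
    rw [hSx, hTx, map_sub]
  have hSB : ∀ x : X, S (B x) = B (T x) := fun x => by
    rw [hSx, hTx, map_sub]
  -- Step 1 : finite-dimensional kernel
  have hker : FiniteDimensional ℂ (LinearMap.ker (S : X →ₗ[ℂ] X)) := by
    let f : LinearMap.ker (S : X →ₗ[ℂ] X) →ₗ[ℂ] LinearMap.ker (T : X →ₗ[ℂ] X) :=
      { toFun := fun x => ⟨A x, by
          have hx : S (x : X) = 0 := x.2
          have : T (A (x : X)) = A (S (x : X)) := (hAS _).symm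
          rw [hx, map_zero] at this
          exact LinearMap.mem_ker.mpr this⟩
        map_add' := fun x y => by ext; simp
        map_smul' := fun c x => by ext; simp }
    have hf : Function.Injective f := by
      intro x y hxy
      have hAxy : A (x : X) = A (y : X) := congrArg Subtype.val hxy
      have hx : (x : X) = B (A (x : X)) := by
        have h0 : S (x : X) = 0 := x.2
        have := hSx (x : X)
        rw [h0] at this
        exact (sub_eq_zero.mp this.symm)
      have hy : (y : X) = B (A (y : X)) := by
        have h0 : S (y : X) = 0 := y.2
        have := hSx (y : X)
        rw [h0] at this
        exact (sub_eq_zero.mp this.symm)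
      ext
      rw [hx, hy, hAxy]
    exact FiniteDimensional.of_injective f hf
  -- Step 2 : finite-dimensional cokernel
  have hBle : LinearMap.range (T : X →ₗ[ℂ] X) ≤
      LinearMap.ker ((LinearMap.range (S : X →ₗ[ℂ] X)).mkQ.comp (B : X →ₗ[ℂ] X)) := by
    rintro x ⟨y, rfl⟩
    have : B (T y) = S (B y) := (hSB y).symm
    simp only [LinearMap.mem_ker, LinearMap.comp_apply, ContinuousLinearMap.coe_coe]
    rw [this, Submodule.mkQ_apply, Submodule.Quotient.mk_eq_zero]
    exact ⟨B y, rfl⟩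
  have hcok : FiniteDimensional ℂ (X ⧸ LinearMap.range (S : X →ₗ[ℂ] X)) := by
    let g := (LinearMap.range (T : X →ₗ[ℂ] X)).liftQ
      ((LinearMap.range (S : X →ₗ[ℂ] X)).mkQ.comp (B : X →ₗ[ℂ] X)) hBle
    have hg : Function.Surjective g := by
      intro z
      obtain ⟨x, rfl⟩ := Submodule.mkQ_surjective _ z
      refine ⟨Submodule.Quotient.mk (A x), ?_⟩
      show Submodule.Quotient.mk (B (A x)) = Submodule.Quotient.mk x
      rw [Submodule.Quotient.eq]
      exact ⟨-x, by show S (-x) = B (A x) - x; rw [map_neg, hSx]; abel⟩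
    exact Module.Finite.of_surjective g hg
  -- Step 3 : closed range
  refine ⟨?_, hker, hcok⟩
  haveI := hker
  have hcc : (LinearMap.ker (S : X →ₗ[ℂ] X)).ClosedComplemented :=
    Submodule.ClosedComplemented.of_finiteDimensional _
  obtain ⟨G, hGclosed, hGcompl⟩ := hcc.exists_isClosed_isCompl
  obtain ⟨F, hFcompl⟩ := Submodule.exists_isCompl (LinearMap.range (S : X →ₗ[ℂ] X))
  haveI := hcok
  haveI : FiniteDimensional ℂ F :=
    ((LinearMap.range (S : X →ₗ[ℂ] X)).quotientEquivOfIsCompl F hFcompl).finiteDimensional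
  haveI : CompleteSpace G := hGclosed.completeSpace_coe
  haveI : CompleteSpace F := F.closed_of_finiteDimensional.completeSpace_coe
  -- decomposition through G
  have hdec : ∀ y : X, ∃ g ∈ G, S g = S y := by
    intro y
    have hy : y ∈ LinearMap.ker (S : X →ₗ[ℂ] X) ⊔ G := by
      rw [hGcompl.sup_eq_top]; trivial
    obtain ⟨k, hk, g, hg, hkg⟩ := Submodule.mem_sup.mp hy
    refine ⟨g, hg, ?_⟩
    have hk0 : S k = 0 := hk
    rw [← hkg, map_add, hk0, zero_add]
  let Φ : (G × F) →L[ℂ] X := (S.comp G.subtypeL).coprod F.subtypeL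
  have hΦ : ∀ p : G × F, Φ p = S (p.1 : X) + (p.2 : X) := fun p => rfl
  have hΦker : Φ.ker = ⊥ := by
    rw [eq_bot_iff]
    rintro ⟨g, f⟩ hp
    have hp0 : S (g : X) + (f : X) = 0 := hp
    have hSg : S (g : X) = -(f : X) := eq_neg_of_add_eq_zero_left hp0
    have hmem : S (g : X) ∈ LinearMap.range (S : X →ₗ[ℂ] X) ⊓ F :=
      ⟨⟨g, rfl⟩, hSg ▸ F.neg_mem f.2⟩
    rw [hFcompl.inf_eq_bot, Submodule.mem_bot] at hmem
    have hg0 : (g : X) ∈ LinearMap.ker (S : X →ₗ[ℂ] X) ⊓ G := ⟨hmem, g.2⟩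
    rw [hGcompl.inf_eq_bot, Submodule.mem_bot] at hg0
    have hf0 : (f : X) = 0 := by
      have := hp0
      rw [hmem, zero_add] at this
      exact this
    rw [Submodule.mem_bot]
    exact Prod.ext (Subtype.ext hg0) (Subtype.ext hf0)
  have hΦrange : Φ.range = ⊤ := by
    rw [eq_top_iff]
    rintro x -
    have hx : x ∈ LinearMap.range (S : X →ₗ[ℂ] X) ⊔ F := by
      rw [hFcompl.sup_eq_top]; trivial
    obtain ⟨r, hr, f, hf, hrf⟩ := Submodule.mem_sup.mp hx
    obtain ⟨y, rfl⟩ := hr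
    obtain ⟨g, hg, hgy⟩ := hdec y
    exact ⟨(⟨g, hg⟩, ⟨f, hf⟩), by show Φ _ = x; rw [hΦ]; simpa [hgy] using hrf⟩
  let e := ContinuousLinearEquiv.ofBijective Φ hΦker hΦrange
  have he : ∀ p : G × F, e p = S (p.1 : X) + (p.2 : X) := fun p => by
    rw [show (e p : X) = Φ p from congrFun (ContinuousLinearEquiv.coeFn_ofBijective Φ hΦker hΦrange) p, hΦ]
  have hset : (LinearMap.range (S : X →ₗ[ℂ] X) : Set X) =
      e '' {p : G × F | p.2 = 0} := by
    ext x
    constructor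
    · rintro ⟨y, rfl⟩
      obtain ⟨g, hg, hgy⟩ := hdec y
      exact ⟨(⟨g, hg⟩, 0), rfl, by rw [he]; simpa using hgy⟩
    · rintro ⟨⟨g, f⟩, hf0, rfl⟩
      have : f = 0 := hf0
      rw [he, this]
      exact ⟨g, by simp⟩
  rw [hset]
  exact (e.toHomeomorph.isClosedMap) _ (isClosed_eq continuous_snd continuous_const)
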